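/- In the first Garcia–Stichtenoth tower E over F_{q²}, if z_i := x_{i−1}x_i satisfies z_i^q + z_i = x_{i−1}^{q+1} for all i ≥ 1 and x_i^{q+1} = z_{i+1}^q + z_{i+1}, then z_{i+1}^q + z_{i+1} = z_i^q/(z_i^{q−1} + 1) for all i ≥ 1; i.e., the variables z_i satisfy the recursion of the second Garcia–Stichtenoth tower. -/

import Mathlib

/-- **From the first to the second Garcia–Stichtenoth tower.**
In the first Garcia–Stichtenoth tower over `F_{q²}`, set `z_i := x_{i−1}·x_i`.  If
`z_i^q + z_i = x_{i−1}^{q+1}` and `z_{i+1}^q + z_{i+1} = x_i^{q+1}` (with the relevant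
denominators nonzero), then `z_{i+1}^q + z_{i+1} = z_i^q/(z_i^{q−1} + 1)`, i.e. the
variables `z_i` satisfy the recursion of the second Garcia–Stichtenoth tower. -/
theorem first_to_second_gs_tower (q : ℕ) (hq : 2 ≤ q)
    (K : Type*) [Field K]
    (xim xi zi zi1 : K)
    (hz : zi = xim * xi)
    (hxim : xim ≠ 0) (hzi : zi ≠ 0) (hden : zi ^ (q - 1) + 1 ≠ 0)
    (h1 : zi ^ q + zi = xim ^ (q + 1))
    (h2 : zi1 ^ q + zi1 = xi ^ (q + 1)) :
    zi1 ^ q + zi1 = zi ^ q / (zi ^ (q - 1) + 1) := by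
  have hq1 : q - 1 + 1 = q := by omega
  have hzq : zi ^ q = zi ^ (q - 1) * zi := by rw [← pow_succ, hq1]
  have hxim1 : xim ^ (q + 1) ≠ 0 := pow_ne_zero _ hxim
  have hx : xi = zi / xim := by field_simp [hz]; rw [hz]; ring
  have hzq1 : zi ^ (q + 1) = zi ^ (q - 1) * zi * zi := by rw [pow_succ, hzq]
  rw [h2, hx, div_pow, div_eq_div_iff hxim1 hden, ← h1, hzq1, hzq]
  ring
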